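/- Let γ = (c_1,…,c_n) be a clan of signature (p,q), let (i,j) be a pair of γ, and suppose j < n and c_{j+1} is a sign (+ or −). Let γ′ be the clan obtained from γ by interchanging the entries in positions j and j+1 (so the number moves one step farther from its mate, across a sign). Then D(γ′) = D(γ) + 1. Symmetrically, if i > 1 and c_{i−1} is a sign, interchanging positions i−1 and i also increases D by exactly 1. (This is the move that interchanges a number with a sign so as to move the number farther from its equal mate, which makes the corresponding orbit strictly larger.) -/

import Mathlib

/-- An entry of a clan: a plus sign, a minus sign, or a natural number. -/
inductive CEntry : Type where
  | plus : CEntry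
  | minus : CEntry
  | num : ℕ → CEntry
deriving DecidableEq

/-- Whether an entry is a natural number. -/
def CEntry.isNum : CEntry → Bool
  | .num _ => true
  | _ => false

/-- Whether an entry is a sign (`+` or `−`). -/
def CEntry.isSign : CEntry → Bool
  | .num _ => false
  | _ => true

/-- A clan of signature `(p, q)`: a sequence of `n = p + q` symbols, each `+`, `−`, or a
natural number, such that every natural number occurring in the sequence occurs exactly
twice, and the number of `+` entries plus the number of pairs of equal numbers is `p`. -/
structure Clan (n p q : ℕ) : Type where
  c : Fin n → CEntry
  total : n = p + q
  twice : ∀ a : ℕ, (Finset.univ.filter fun i => c i = CEntry.num a).card = 0 ∨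
      (Finset.univ.filter fun i => c i = CEntry.num a).card = 2
  signature : (Finset.univ.filter fun i => c i = CEntry.plus).card
      + (Finset.univ.filter fun i => (c i).isNum = true).card / 2 = p

namespace Clan

variable {n p q : ℕ}

/-- `(i, j)` is a pair of the clan `γ`: `i < j` and `c i = c j` is a natural number. -/
def IsPair (γ : Clan n p q) (i j : Fin n) : Prop :=
  i < j ∧ γ.c i = γ.c j ∧ (γ.c i).isNum = true

instance (γ : Clan n p q) (i j : Fin n) : Decidable (γ.IsPair i j) := by
  unfold IsPair; infer_instance

/-- The finset of all pairs of the clan `γ`. -/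
def pairs (γ : Clan n p q) : Finset (Fin n × Fin n) :=
  Finset.univ.filter fun x => γ.IsPair x.1 x.2

/-- The contribution `j − i − #{pairs (s,t) of γ with s < i < t < j}` of a pair `(i, j)`
to the dimension of the orbit parametrized by `γ`. -/
def summand (γ : Clan n p q) (x : Fin n × Fin n) : ℕ :=
  (x.2 : ℕ) - (x.1 : ℕ) -
    (γ.pairs.filter fun y => y.1 < x.1 ∧ x.1 < y.2 ∧ y.2 < x.2).card

/-- `d_{p,q} = (p(p−1) + q(q−1))/2`, the dimension of the closed orbits. -/
def dpq (p q : ℕ) : ℕ := (p * (p - 1) + q * (q - 1)) / 2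

/-- The dimension of the `GL_p × GL_q`-orbit on the flag variety parametrized by `γ`. -/
def D (γ : Clan n p q) : ℕ := dpq p q + ∑ x ∈ γ.pairs, γ.summand x

/-- `γ` includes the pattern `(1, +, −, 1)`. -/
def Includes1pm1 (γ : Clan n p q) : Prop :=
  ∃ i k l j : Fin n, i < k ∧ k < l ∧ l < j ∧
    γ.c k = CEntry.plus ∧ γ.c l = CEntry.minus ∧ γ.IsPair i j

/-- `γ` includes the pattern `(1, −, +, 1)`. -/
def Includes1mp1 (γ : Clan n p q) : Prop :=
  ∃ i k l j : Fin n, i < k ∧ k < l ∧ l < j ∧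
    γ.c k = CEntry.minus ∧ γ.c l = CEntry.plus ∧ γ.IsPair i j

/-- `γ` includes the pattern `(1, 2, 1, 2)`. -/
def Includes1212 (γ : Clan n p q) : Prop :=
  ∃ i s j t : Fin n, i < s ∧ s < j ∧ j < t ∧
    γ.IsPair i j ∧ γ.IsPair s t ∧ γ.c i ≠ γ.c s

/-- `γ` includes the pattern `(1, +, 2, 2, 1)`. -/
def Includes1p221 (γ : Clan n p q) : Prop :=
  ∃ i k s t j : Fin n, i < k ∧ k < s ∧ s < t ∧ t < j ∧
    γ.c k = CEntry.plus ∧ γ.IsPair i j ∧ γ.IsPair s t ∧ γ.c i ≠ γ.c s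

/-- `γ` includes the pattern `(1, −, 2, 2, 1)`. -/
def Includes1m221 (γ : Clan n p q) : Prop :=
  ∃ i k s t j : Fin n, i < k ∧ k < s ∧ s < t ∧ t < j ∧
    γ.c k = CEntry.minus ∧ γ.IsPair i j ∧ γ.IsPair s t ∧ γ.c i ≠ γ.c s

/-- `γ` includes the pattern `(1, 2, 2, +, 1)`. -/
def Includes122p1 (γ : Clan n p q) : Prop :=
  ∃ i s t k j : Fin n, i < s ∧ s < t ∧ t < k ∧ k < j ∧
    γ.c k = CEntry.plus ∧ γ.IsPair i j ∧ γ.IsPair s t ∧ γ.c i ≠ γ.c s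

/-- `γ` includes the pattern `(1, 2, 2, −, 1)`. -/
def Includes122m1 (γ : Clan n p q) : Prop :=
  ∃ i s t k j : Fin n, i < s ∧ s < t ∧ t < k ∧ k < j ∧
    γ.c k = CEntry.minus ∧ γ.IsPair i j ∧ γ.IsPair s t ∧ γ.c i ≠ γ.c s

/-- `γ` avoids the seven patterns `(1,+,−,1)`, `(1,−,+,1)`, `(1,2,1,2)`, `(1,+,2,2,1)`,
`(1,−,2,2,1)`, `(1,2,2,+,1)`, `(1,2,2,−,1)`. -/
def AvoidsSeven (γ : Clan n p q) : Prop :=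
  ¬ γ.Includes1pm1 ∧ ¬ γ.Includes1mp1 ∧ ¬ γ.Includes1212 ∧
    ¬ γ.Includes1p221 ∧ ¬ γ.Includes1m221 ∧ ¬ γ.Includes122p1 ∧ ¬ γ.Includes122m1

end Clan

/-- The move replacing a pair of opposite signs of `γ` in positions `i < j` by a pair of
equal numbers not occurring in `γ`, yielding `γ'`. -/
def ReplaceMove {n p q : ℕ} (γ γ' : Clan n p q) : Prop :=
  ∃ i j : Fin n, i < j ∧
    ((γ.c i = CEntry.plus ∧ γ.c j = CEntry.minus) ∨
      (γ.c i = CEntry.minus ∧ γ.c j = CEntry.plus)) ∧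
    (∃ a : ℕ, (∀ k, γ.c k ≠ CEntry.num a) ∧
      γ'.c i = CEntry.num a ∧ γ'.c j = CEntry.num a) ∧
    ∀ k, k ≠ i → k ≠ j → γ'.c k = γ.c k

namespace ClanAux

open Clan

variable {n p q : ℕ}

lemma exists_num {e : CEntry} (h : e.isNum = true) : ∃ a, e = CEntry.num a := by
  cases e
  · exact absurd h (by simp [CEntry.isNum])
  · exact absurd h (by simp [CEntry.isNum])
  · exact ⟨_, rfl⟩

lemma num_unique (γ : Clan n p q) {a : ℕ} {s t : Fin n} (hst : s ≠ t)
    (hs : γ.c s = CEntry.num a) (ht : γ.c t = CEntry.num a) {k : Fin n}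
    (hk : γ.c k = CEntry.num a) : k = s ∨ k = t := by
  have hsS : s ∈ Finset.univ.filter fun i => γ.c i = CEntry.num a := by simp [hs]
  have htS : t ∈ Finset.univ.filter fun i => γ.c i = CEntry.num a := by simp [ht]
  have hkS : k ∈ Finset.univ.filter fun i => γ.c i = CEntry.num a := by simp [hk]
  have hcard : (Finset.univ.filter fun i => γ.c i = CEntry.num a).card = 2 := by
    rcases γ.twice a with h | h
    · rw [Finset.card_eq_zero] at h
      rw [h] at hsS
      simp at hsS
    · exact h
  have hsub : ({s, t} : Finset (Fin n)) ⊆ Finset.univ.filter fun i => γ.c i = CEntry.num a := by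
    intro x hx
    rcases Finset.mem_insert.mp hx with rfl | hx
    · exact hsS
    · rw [Finset.mem_singleton.mp hx]; exact htS
  have heq : ({s, t} : Finset (Fin n)) = Finset.univ.filter fun i => γ.c i = CEntry.num a := by
    refine Finset.eq_of_subset_of_card_le hsub ?_
    rw [hcard, Finset.card_pair hst]
  rw [← heq] at hkS
  simpa using hkS

lemma touch (γ : Clan n p q) {i j s t : Fin n} (h : γ.IsPair i j) (h' : γ.IsPair s t)
    (hd : s = i ∨ s = j ∨ t = i ∨ t = j) : s = i ∧ t = j := by
  obtain ⟨hij, hcc, hnum⟩ := h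
  obtain ⟨hst, hcc', hnum'⟩ := h'
  obtain ⟨a, ha⟩ := exists_num hnum
  have haj : γ.c j = CEntry.num a := hcc ▸ ha
  have hcs : γ.c s = CEntry.num a := by
    rcases hd with h1 | h1 | h1 | h1
    · rw [h1]; exact ha
    · rw [h1]; exact haj
    · rw [hcc', h1]; exact ha
    · rw [hcc', h1]; exact haj
  have hct : γ.c t = CEntry.num a := hcc' ▸ hcs
  have hijne : i ≠ j := Fin.ne_of_lt hij
  have h1 := num_unique γ hijne ha haj hcs
  have h2 := num_unique γ hijne ha haj hct
  rcases h1 with h1 | h1 <;> rcases h2 with h2 | h2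
  · exact absurd (h1.trans h2.symm) (Fin.ne_of_lt hst)
  · exact ⟨h1, h2⟩
  · exfalso
    rw [h1, h2] at hst
    exact lt_asymm hij hst
  · exact absurd (h1.trans h2.symm) (Fin.ne_of_lt hst)

lemma mem_pairs (γ : Clan n p q) (x : Fin n × Fin n) :
    x ∈ γ.pairs ↔ γ.IsPair x.1 x.2 := by
  simp [Clan.pairs]

lemma card_filter_swap {α : Type*} [DecidableEq α] {S : Finset α} {P : α → Prop}
    [DecidablePred P] {x x' : α} (hx : x ∈ S) (hx' : x' ∉ S) (hPP : P x ↔ P x') :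
    ((insert x' (S.erase x)).filter P).card = (S.filter P).card := by
  rw [Finset.filter_insert, Finset.filter_erase]
  by_cases hP : P x
  · rw [if_pos (hPP.mp hP)]
    rw [Finset.card_insert_of_notMem
      (fun h => hx' (Finset.mem_of_mem_filter x' (Finset.mem_of_mem_erase h)))]
    rw [Finset.card_erase_of_mem (Finset.mem_filter.mpr ⟨hx, hP⟩)]
    have hpos : 0 < (S.filter P).card :=
      Finset.card_pos.mpr ⟨x, Finset.mem_filter.mpr ⟨hx, hP⟩⟩
    omega
  · rw [if_neg (fun h => hP (hPP.mpr h))]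
    rw [Finset.erase_eq_of_notMem (fun h => hP (Finset.mem_filter.mp h).2)]

lemma D_step (γ γ' : Clan n p q) (x x' : Fin n × Fin n)
    (hx : x ∈ γ.pairs) (hx' : x' ∉ γ.pairs.erase x)
    (hpairs : γ'.pairs = insert x' (γ.pairs.erase x))
    (hs : ∀ y ∈ γ.pairs, y ≠ x → γ'.summand y = γ.summand y)
    (hm : γ'.summand x' = γ.summand x + 1) : γ'.D = γ.D + 1 := by
  unfold Clan.D
  rw [hpairs, Finset.sum_insert hx', hm]
  have he : ∑ y ∈ γ.pairs.erase x, γ'.summand y = ∑ y ∈ γ.pairs.erase x, γ.summand y :=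
    Finset.sum_congr rfl fun y hy =>
      hs y (Finset.mem_of_mem_erase hy) (Finset.ne_of_mem_erase hy)
  rw [he, ← Finset.add_sum_erase _ _ hx]
  ring

lemma step_right (γ γ' : Clan n p q) (i j j₁ : Fin n) (hpij : γ.IsPair i j)
    (hj1 : (j₁ : ℕ) = (j : ℕ) + 1) (hsign : (γ.c j₁).isSign = true)
    (h1 : γ'.c j = γ.c j₁) (h2 : γ'.c j₁ = γ.c j)
    (h3 : ∀ k, k ≠ j → k ≠ j₁ → γ'.c k = γ.c k) : γ'.D = γ.D + 1 := by
  obtain ⟨hij, hcc, hnum⟩ := hpij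
  obtain ⟨a, ha⟩ := exists_num hnum
  have haj : γ.c j = CEntry.num a := hcc ▸ ha
  have hjj₁ : j < j₁ := by rw [Fin.lt_def]; omega
  have hij₁ : i < j₁ := hij.trans hjj₁
  have hsign_not : ∀ b, γ.c j₁ ≠ CEntry.num b := by
    intro b hb
    rw [hb] at hsign
    simp [CEntry.isSign] at hsign
  have hci' : γ'.c i = CEntry.num a := by
    rw [h3 i (Fin.ne_of_lt hij) (Fin.ne_of_lt hij₁)]; exact ha
  have hcj₁' : γ'.c j₁ = CEntry.num a := h2.trans haj
  have hp : γ.IsPair i j := ⟨hij, ha.trans haj.symm, by rw [ha]; rfl⟩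
  have hp' : γ'.IsPair i j₁ := ⟨hij₁, hci'.trans hcj₁'.symm, by rw [hci']; rfl⟩
  have hsign' : ∀ b, γ'.c j ≠ CEntry.num b := by
    intro b hb
    exact hsign_not b (h1.symm.trans hb)
  -- characterization of pairs of γ'
  have hchar : ∀ s t : Fin n, γ'.IsPair s t ↔
      ((s, t) = (i, j₁) ∨ (γ.IsPair s t ∧ (s, t) ≠ (i, j))) := by
    intro s t
    constructor
    · intro h
      by_cases hd : s = i ∨ s = j₁ ∨ t = i ∨ t = j₁
      · left
        obtain ⟨e1, e2⟩ := touch γ' hp' h hd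
        rw [e1, e2]
      · push_neg at hd
        right
        obtain ⟨hst, hcc', hnum'⟩ := h
        obtain ⟨b, hb⟩ := exists_num hnum'
        have hsj : s ≠ j := by rintro rfl; exact hsign' b hb
        have htj : t ≠ j := by rintro rfl; exact hsign' b (hcc' ▸ hb)
        have hcs : γ.c s = CEntry.num b := by rw [← h3 s hsj hd.2.1]; exact hb
        have hct : γ.c t = CEntry.num b := by rw [← h3 t htj hd.2.2.2]; exact hcc' ▸ hb
        refine ⟨⟨hst, hcs.trans hct.symm, by rw [hcs]; rfl⟩, ?_⟩
        intro he
        exact htj (congrArg Prod.snd he)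
    · rintro (he | ⟨hpst, hne⟩)
      · rw [Prod.mk.injEq] at he
        obtain ⟨rfl, rfl⟩ := he
        exact hp'
      · obtain ⟨hst, hcc', hnum'⟩ := hpst
        obtain ⟨b, hb⟩ := exists_num hnum'
        have hsj : s ≠ j := by
          intro h
          obtain ⟨e1, e2⟩ := touch γ hp ⟨hst, hcc', hnum'⟩ (Or.inr (Or.inl h))
          exact hne (by rw [e1, e2])
        have htj : t ≠ j := by
          intro h
          obtain ⟨e1, e2⟩ := touch γ hp ⟨hst, hcc', hnum'⟩ (Or.inr (Or.inr (Or.inr h)))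
          exact hne (by rw [e1, e2])
        have hsj₁ : s ≠ j₁ := by rintro rfl; exact hsign_not b hb
        have htj₁ : t ≠ j₁ := by rintro rfl; exact hsign_not b (hcc' ▸ hb)
        have hcs : γ'.c s = CEntry.num b := by rw [h3 s hsj hsj₁]; exact hb
        have hct : γ'.c t = CEntry.num b := by rw [h3 t htj htj₁]; exact hcc' ▸ hb
        exact ⟨hst, hcs.trans hct.symm, by rw [hcs]; rfl⟩
  have hx_mem : (i, j) ∈ γ.pairs := (mem_pairs γ _).mpr hp
  have hx'_notS : (i, j₁) ∉ γ.pairs := by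
    intro h
    have hh := (mem_pairs γ _).mp h
    obtain ⟨b, hb⟩ := exists_num hh.2.2
    exact hsign_not b (hh.2.1.symm.trans hb)
  have hx'_not : (i, j₁) ∉ γ.pairs.erase (i, j) :=
    fun h => hx'_notS (Finset.mem_of_mem_erase h)
  have hpairs : γ'.pairs = insert (i, j₁) (γ.pairs.erase (i, j)) := by
    ext ⟨s, t⟩
    rw [mem_pairs, Finset.mem_insert, Finset.mem_erase, mem_pairs, hchar s t]
    tauto
  -- no pair of γ other than (i,j) has coordinate j or j₁
  have hcoord : ∀ y ∈ γ.pairs, y ≠ (i, j) → y.1 ≠ j ∧ y.2 ≠ j ∧ y.1 ≠ j₁ ∧ y.2 ≠ j₁ := by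
    intro y hy hne
    have hpy := (mem_pairs γ y).mp hy
    obtain ⟨b, hb⟩ := exists_num hpy.2.2
    refine ⟨?_, ?_, ?_, ?_⟩
    · intro h
      obtain ⟨e1, e2⟩ := touch γ hp hpy (Or.inr (Or.inl h))
      exact hne (Prod.ext e1 e2)
    · intro h
      obtain ⟨e1, e2⟩ := touch γ hp hpy (Or.inr (Or.inr (Or.inr h)))
      exact hne (Prod.ext e1 e2)
    · intro h
      exact hsign_not b (h ▸ hb)
    · intro h
      exact hsign_not b (h ▸ (hpy.2.1 ▸ hb))
  have hsum : ∀ y ∈ γ.pairs, y ≠ (i, j) → γ'.summand y = γ.summand y := by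
    intro y hy hne
    obtain ⟨hy1j, hy2j, hy1j₁, hy2j₁⟩ := hcoord y hy hne
    unfold Clan.summand
    congr 1
    rw [hpairs]
    rw [card_filter_swap hx_mem hx'_notS]
    have hv1 : (y.1 : ℕ) ≠ (j : ℕ) := fun h => hy1j (Fin.ext h)
    have hv2 : (y.2 : ℕ) ≠ (j₁ : ℕ) := fun h => hy2j₁ (Fin.ext h)
    show (i < y.1 ∧ y.1 < j ∧ j < y.2) ↔ (i < y.1 ∧ y.1 < j₁ ∧ j₁ < y.2)
    simp only [Fin.lt_def]
    omega
  have hmoved : γ'.summand (i, j₁) = γ.summand (i, j) + 1 := by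
    have hfeq : (γ'.pairs.filter fun y => y.1 < i ∧ i < y.2 ∧ y.2 < j₁).card
        = (γ.pairs.filter fun y => y.1 < i ∧ i < y.2 ∧ y.2 < j).card := by
      rw [hpairs]
      rw [card_filter_swap hx_mem hx'_notS (by simp)]
      congr 1
      apply Finset.filter_congr
      intro z hz
      by_cases hze : z = (i, j)
      · subst hze
        simp
      · have h2j := (hcoord z hz hze).2.1
        have hv : (z.2 : ℕ) ≠ (j : ℕ) := fun h => h2j (Fin.ext h)
        simp only [Fin.lt_def]
        omega
    have hC : (γ.pairs.filter fun y => y.1 < i ∧ i < y.2 ∧ y.2 < j).card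
        ≤ (Finset.Ioo (i : ℕ) (j : ℕ)).card := by
      apply Finset.card_le_card_of_injOn (fun z => (z.2 : ℕ))
      · intro z hz
        rw [Finset.mem_coe, Finset.mem_filter] at hz
        rw [Finset.mem_coe, Finset.mem_Ioo]
        exact ⟨hz.2.2.1, hz.2.2.2⟩
      · intro z hz z' hz' hzz
        simp only [Finset.coe_filter, Set.mem_setOf_eq] at hz hz'
        have hpz := (mem_pairs γ z).mp hz.1
        have hpz' := (mem_pairs γ z').mp hz'.1
        have e : z'.2 = z.2 := (Fin.ext hzz).symm
        obtain ⟨e1, e2⟩ := touch γ hpz hpz' (Or.inr (Or.inr (Or.inr e)))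
        exact (Prod.ext e1 e2).symm
    rw [Nat.card_Ioo] at hC
    have hvij : (i : ℕ) < (j : ℕ) := hij
    unfold Clan.summand
    show (j₁ : ℕ) - (i : ℕ) -
        (γ'.pairs.filter fun y => y.1 < i ∧ i < y.2 ∧ y.2 < j₁).card
      = (j : ℕ) - (i : ℕ) -
        (γ.pairs.filter fun y => y.1 < i ∧ i < y.2 ∧ y.2 < j).card + 1
    rw [hfeq]
    omega
  exact D_step γ γ' (i, j) (i, j₁) hx_mem hx'_not hpairs hsum hmoved

lemma step_left (γ γ' : Clan n p q) (i j i₀ : Fin n) (hpij : γ.IsPair i j)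
    (hi0 : (i₀ : ℕ) + 1 = (i : ℕ)) (hsign : (γ.c i₀).isSign = true)
    (h1 : γ'.c i₀ = γ.c i) (h2 : γ'.c i = γ.c i₀)
    (h3 : ∀ k, k ≠ i₀ → k ≠ i → γ'.c k = γ.c k) : γ'.D = γ.D + 1 := by
  obtain ⟨hij, hcc, hnum⟩ := hpij
  obtain ⟨a, ha⟩ := exists_num hnum
  have haj : γ.c j = CEntry.num a := hcc ▸ ha
  have hi₀i : i₀ < i := by rw [Fin.lt_def]; omega
  have hi₀j : i₀ < j := hi₀i.trans hij
  have hsign_not : ∀ b, γ.c i₀ ≠ CEntry.num b := by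
    intro b hb
    rw [hb] at hsign
    simp [CEntry.isSign] at hsign
  have hcj' : γ'.c j = CEntry.num a := by
    rw [h3 j (Fin.ne_of_lt hi₀j).symm (Fin.ne_of_lt hij).symm]; exact haj
  have hci₀' : γ'.c i₀ = CEntry.num a := h1.trans ha
  have hp : γ.IsPair i j := ⟨hij, ha.trans haj.symm, by rw [ha]; rfl⟩
  have hp' : γ'.IsPair i₀ j := ⟨hi₀j, hci₀'.trans hcj'.symm, by rw [hci₀']; rfl⟩
  have hsign' : ∀ b, γ'.c i ≠ CEntry.num b := by
    intro b hb
    exact hsign_not b (h2.symm.trans hb)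
  have hchar : ∀ s t : Fin n, γ'.IsPair s t ↔
      ((s, t) = (i₀, j) ∨ (γ.IsPair s t ∧ (s, t) ≠ (i, j))) := by
    intro s t
    constructor
    · intro h
      by_cases hd : s = i₀ ∨ s = j ∨ t = i₀ ∨ t = j
      · left
        obtain ⟨e1, e2⟩ := touch γ' hp' h hd
        rw [e1, e2]
      · push_neg at hd
        right
        obtain ⟨hst, hcc', hnum'⟩ := h
        obtain ⟨b, hb⟩ := exists_num hnum'
        have hsi : s ≠ i := by rintro rfl; exact hsign' b hb
        have hti : t ≠ i := by rintro rfl; exact hsign' b (hcc' ▸ hb)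
        have hcs : γ.c s = CEntry.num b := by rw [← h3 s hd.1 hsi]; exact hb
        have hct : γ.c t = CEntry.num b := by rw [← h3 t hd.2.2.1 hti]; exact hcc' ▸ hb
        refine ⟨⟨hst, hcs.trans hct.symm, by rw [hcs]; rfl⟩, ?_⟩
        intro he
        exact hsi (congrArg Prod.fst he)
    · rintro (he | ⟨hpst, hne⟩)
      · rw [Prod.mk.injEq] at he
        obtain ⟨rfl, rfl⟩ := he
        exact hp'
      · obtain ⟨hst, hcc', hnum'⟩ := hpst
        obtain ⟨b, hb⟩ := exists_num hnum'
        have hsi : s ≠ i := by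
          intro h
          obtain ⟨e1, e2⟩ := touch γ hp ⟨hst, hcc', hnum'⟩ (Or.inl h)
          exact hne (by rw [e1, e2])
        have hti : t ≠ i := by
          intro h
          obtain ⟨e1, e2⟩ := touch γ hp ⟨hst, hcc', hnum'⟩ (Or.inr (Or.inr (Or.inl h)))
          exact hne (by rw [e1, e2])
        have hsi₀ : s ≠ i₀ := by rintro rfl; exact hsign_not b hb
        have hti₀ : t ≠ i₀ := by rintro rfl; exact hsign_not b (hcc' ▸ hb)
        have hcs : γ'.c s = CEntry.num b := by rw [h3 s hsi₀ hsi]; exact hb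
        have hct : γ'.c t = CEntry.num b := by rw [h3 t hti₀ hti]; exact hcc' ▸ hb
        exact ⟨hst, hcs.trans hct.symm, by rw [hcs]; rfl⟩
  have hx_mem : (i, j) ∈ γ.pairs := (mem_pairs γ _).mpr hp
  have hx'_notS : (i₀, j) ∉ γ.pairs := by
    intro h
    have hh := (mem_pairs γ _).mp h
    obtain ⟨b, hb⟩ := exists_num hh.2.2
    exact hsign_not b hb
  have hx'_not : (i₀, j) ∉ γ.pairs.erase (i, j) :=
    fun h => hx'_notS (Finset.mem_of_mem_erase h)
  have hpairs : γ'.pairs = insert (i₀, j) (γ.pairs.erase (i, j)) := by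
    ext ⟨s, t⟩
    rw [mem_pairs, Finset.mem_insert, Finset.mem_erase, mem_pairs, hchar s t]
    tauto
  have hcoord : ∀ y ∈ γ.pairs, y ≠ (i, j) → y.1 ≠ i ∧ y.2 ≠ i ∧ y.1 ≠ i₀ ∧ y.2 ≠ i₀ := by
    intro y hy hne
    have hpy := (mem_pairs γ y).mp hy
    obtain ⟨b, hb⟩ := exists_num hpy.2.2
    refine ⟨?_, ?_, ?_, ?_⟩
    · intro h
      obtain ⟨e1, e2⟩ := touch γ hp hpy (Or.inl h)
      exact hne (Prod.ext e1 e2)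
    · intro h
      obtain ⟨e1, e2⟩ := touch γ hp hpy (Or.inr (Or.inr (Or.inl h)))
      exact hne (Prod.ext e1 e2)
    · intro h
      exact hsign_not b (h ▸ hb)
    · intro h
      exact hsign_not b (h ▸ (hpy.2.1 ▸ hb))
  have hsum : ∀ y ∈ γ.pairs, y ≠ (i, j) → γ'.summand y = γ.summand y := by
    intro y hy hne
    obtain ⟨hy1i, hy2i, hy1i₀, hy2i₀⟩ := hcoord y hy hne
    unfold Clan.summand
    congr 1
    rw [hpairs]
    rw [card_filter_swap hx_mem hx'_notS]
    have hv1 : (y.1 : ℕ) ≠ (i : ℕ) := fun h => hy1i (Fin.ext h)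
    show (i < y.1 ∧ y.1 < j ∧ j < y.2) ↔ (i₀ < y.1 ∧ y.1 < j ∧ j < y.2)
    simp only [Fin.lt_def]
    omega
  have hmoved : γ'.summand (i₀, j) = γ.summand (i, j) + 1 := by
    have hfeq : (γ'.pairs.filter fun y => y.1 < i₀ ∧ i₀ < y.2 ∧ y.2 < j).card
        = (γ.pairs.filter fun y => y.1 < i ∧ i < y.2 ∧ y.2 < j).card := by
      rw [hpairs]
      rw [card_filter_swap hx_mem hx'_notS (by simp)]
      congr 1
      apply Finset.filter_congr
      intro z hz
      by_cases hze : z = (i, j)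
      · subst hze
        simp
      · have hc := hcoord z hz hze
        have hv1 : (z.1 : ℕ) ≠ (i₀ : ℕ) := fun h => hc.2.2.1 (Fin.ext h)
        have hv2 : (z.2 : ℕ) ≠ (i : ℕ) := fun h => hc.2.1 (Fin.ext h)
        simp only [Fin.lt_def]
        omega
    have hC : (γ.pairs.filter fun y => y.1 < i ∧ i < y.2 ∧ y.2 < j).card
        ≤ (Finset.Ioo (i : ℕ) (j : ℕ)).card := by
      apply Finset.card_le_card_of_injOn (fun z => (z.2 : ℕ))
      · intro z hz
        rw [Finset.mem_coe, Finset.mem_filter] at hz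
        rw [Finset.mem_coe, Finset.mem_Ioo]
        exact ⟨hz.2.2.1, hz.2.2.2⟩
      · intro z hz z' hz' hzz
        simp only [Finset.coe_filter, Set.mem_setOf_eq] at hz hz'
        have hpz := (mem_pairs γ z).mp hz.1
        have hpz' := (mem_pairs γ z').mp hz'.1
        have e : z'.2 = z.2 := (Fin.ext hzz).symm
        obtain ⟨e1, e2⟩ := touch γ hpz hpz' (Or.inr (Or.inr (Or.inr e)))
        exact (Prod.ext e1 e2).symm
    rw [Nat.card_Ioo] at hC
    have hvij : (i : ℕ) < (j : ℕ) := hij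
    unfold Clan.summand
    show (j : ℕ) - (i₀ : ℕ) -
        (γ'.pairs.filter fun y => y.1 < i₀ ∧ i₀ < y.2 ∧ y.2 < j).card
      = (j : ℕ) - (i : ℕ) -
        (γ.pairs.filter fun y => y.1 < i ∧ i < y.2 ∧ y.2 < j).card + 1
    rw [hfeq]
    omega
  exact D_step γ γ' (i, j) (i₀, j) hx_mem hx'_not hpairs hsum hmoved

end ClanAux

/-- Interchanging the entry of a pair `(i, j)` in position `j` with a sign
in position `j + 1` (moving the number farther from its mate) increases `D` by exactly
`1`, and symmetrically for interchanging position `i` with a sign in position `i − 1`. -/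
theorem dim_move_number_across_sign {n p q : ℕ} :
    (∀ (γ γ' : Clan n p q) (i j j₁ : Fin n), γ.IsPair i j → (j₁ : ℕ) = (j : ℕ) + 1 →
      (γ.c j₁).isSign = true → γ'.c j = γ.c j₁ → γ'.c j₁ = γ.c j →
      (∀ k, k ≠ j → k ≠ j₁ → γ'.c k = γ.c k) → γ'.D = γ.D + 1) ∧
    (∀ (γ γ' : Clan n p q) (i j i₀ : Fin n), γ.IsPair i j → (i₀ : ℕ) + 1 = (i : ℕ) →
      (γ.c i₀).isSign = true → γ'.c i₀ = γ.c i → γ'.c i = γ.c i₀ →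
      (∀ k, k ≠ i₀ → k ≠ i → γ'.c k = γ.c k) → γ'.D = γ.D + 1) := by
  constructor
  · intro γ γ' i j j₁ hpij hj1 hsign h1 h2 h3
    exact ClanAux.step_right γ γ' i j j₁ hpij hj1 hsign h1 h2 h3
  · intro γ γ' i j i₀ hpij hi0 hsign h1 h2 h3
    exact ClanAux.step_left γ γ' i j i₀ hpij hi0 hsign h1 h2 h3
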